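/- Let p(x) = ∑_{l=k}^{n+k} G_l^k(x) x^{n+k−l} / (l!(n+k−l)!). Then for every j with 0 ≤ j ≤ n, the j-th derivative of p is p^{(j)}(x) = 2^j ∑_{l=k+j}^{n+k} G_{l−j}^k(x) x^{n+k−l} / ((l−j)!(n+k−l)!). -/

import Mathlib

open Polynomial Finset

/-- Formal exponential series `e^t` with coefficients in `ℚ[X]`. -/
noncomputable def expPS : PowerSeries (Polynomial ℚ) :=
  PowerSeries.mk fun n => Polynomial.C ((n.factorial : ℚ)⁻¹)

/-- Formal series `e^{xt}` with coefficients in `ℚ[X]`. -/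
noncomputable def expXPS : PowerSeries (Polynomial ℚ) :=
  PowerSeries.mk fun n => Polynomial.C ((n.factorial : ℚ)⁻¹) * Polynomial.X ^ n

/-- `G k n` is the Genocchi polynomial `G_n^{(k)}` of order `k`:
`∑ G_n^k(x) t^n/n! = (2t/(e^t+1))^k e^{xt}`, stated without division. -/
def IsGenocchi (G : ℕ → ℕ → Polynomial ℚ) : Prop :=
  ∀ k : ℕ,
    (PowerSeries.mk fun n => Polynomial.C ((n.factorial : ℚ)⁻¹) * G k n) * (expPS + 1) ^ k
      = (2 * PowerSeries.X) ^ k * expXPS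

/-- `E k n` is the Euler polynomial `E_n^{(k)}` of order `k`:
`∑ E_n^k(x) t^n/n! = (2/(e^t+1))^k e^{xt}`, stated without division. -/
def IsEuler (E : ℕ → ℕ → Polynomial ℚ) : Prop :=
  ∀ k : ℕ,
    (PowerSeries.mk fun n => Polynomial.C ((n.factorial : ℚ)⁻¹) * E k n) * (expPS + 1) ^ k
      = 2 ^ k * expXPS

/-- `B k n` is the Bernoulli polynomial `B_n^{(k)}` of order `k`:
`∑ B_n^k(x) t^n/n! = (t/(e^t-1))^k e^{xt}`, stated without division. -/
def IsBernoulli (B : ℕ → ℕ → Polynomial ℚ) : Prop :=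
  ∀ k : ℕ,
    (PowerSeries.mk fun n => Polynomial.C ((n.factorial : ℚ)⁻¹) * B k n) * (expPS - 1) ^ k
      = PowerSeries.X ^ k * expXPS


noncomputable def Dps : PowerSeries (Polynomial ℚ) → PowerSeries (Polynomial ℚ) :=
  fun f => PowerSeries.mk fun m => derivative (PowerSeries.coeff m f)

lemma Dps_coeff (f : PowerSeries (Polynomial ℚ)) (m : ℕ) :
    PowerSeries.coeff m (Dps f) = derivative (PowerSeries.coeff m f) := by
  simp [Dps]

lemma Dps_mul (f g : PowerSeries (Polynomial ℚ)) :
    Dps (f * g) = Dps f * g + f * Dps g := by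
  ext m
  simp only [Dps_coeff, PowerSeries.coeff_mul, map_add, map_sum, derivative_mul]
  rw [Finset.sum_add_distrib]

lemma Dps_pow_zero (f : PowerSeries (Polynomial ℚ)) (hf : Dps f = 0) (k : ℕ) :
    Dps (f ^ k) = 0 := by
  induction k with
  | zero =>
      apply PowerSeries.ext; intro m
      simp only [Dps_coeff, pow_zero, PowerSeries.coeff_one, map_zero]
      split_ifs <;> simp
  | succ k ih => rw [pow_succ, Dps_mul, ih, hf]; simp

lemma Dps_expPS_add_one : Dps (expPS + 1) = 0 := by
  apply PowerSeries.ext; intro m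
  simp only [Dps_coeff, map_add, PowerSeries.coeff_one, expPS, PowerSeries.coeff_mk, map_zero]
  split_ifs <;> simp

lemma Dps_two_X : Dps (2 * PowerSeries.X) = 0 := by
  apply PowerSeries.ext; intro m
  simp only [Dps_coeff, map_zero, two_mul, map_add, PowerSeries.coeff_X]
  split_ifs <;> simp

lemma Dps_expXPS : Dps expXPS = PowerSeries.X * expXPS := by
  apply PowerSeries.ext; intro m
  rcases m with _ | m
  · simp [Dps_coeff, expXPS]
  · rw [PowerSeries.coeff_succ_X_mul]
    simp only [Dps_coeff, expXPS, PowerSeries.coeff_mk, derivative_mul, derivative_C, zero_mul,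
      zero_add, derivative_X_pow, Nat.factorial_succ]
    rw [Nat.add_sub_cancel, ← mul_assoc, ← C_mul]
    congr 2
    push_cast
    rw [mul_inv]
    field_simp

lemma genocchi_vanish (G : ℕ → ℕ → Polynomial ℚ) (hG : IsGenocchi G) (k : ℕ) :
    ∀ n, n < k → G k n = 0 := by
  intro n
  induction n using Nat.strong_induction_on with
  | _ n ih =>
    intro hn
    have h := hG k
    have h0 : PowerSeries.coeff n ((2 * PowerSeries.X) ^ k * expXPS) = 0 := by
      have hdvd : (PowerSeries.X : PowerSeries (Polynomial ℚ)) ^ k ∣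
          (2 * PowerSeries.X) ^ k * expXPS := by
        exact Dvd.dvd.mul_right (by rw [mul_pow]; exact Dvd.intro_left _ rfl) _
      exact (PowerSeries.X_pow_dvd_iff.mp hdvd) n hn
    have h1 := congrArg (PowerSeries.coeff n) h
    rw [h0, PowerSeries.coeff_mul] at h1
    rw [Finset.sum_eq_single (n, 0)] at h1
    · simp only [PowerSeries.coeff_mk, PowerSeries.coeff_zero_eq_constantCoeff] at h1
      have hc : PowerSeries.constantCoeff ((expPS + 1) ^ k) = 2 ^ k := by
        rw [map_pow, map_add, map_one]
        simp [expPS]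
        norm_num
      rw [hc] at h1
      have h2 : (C ((n.factorial : ℚ)⁻¹) : Polynomial ℚ) ≠ 0 := by
        rw [Ne, C_eq_zero]
        exact inv_ne_zero (by exact_mod_cast Nat.factorial_ne_zero n)
      have h3 : ((2 : Polynomial ℚ) ^ k) ≠ 0 :=
        pow_ne_zero k (by norm_num)
      rcases mul_eq_zero.mp h1 with h4 | h4
      · rcases mul_eq_zero.mp h4 with h5 | h5
        · exact absurd h5 h2
        · exact h5
      · exact absurd h4 h3
    · rintro ⟨a, b⟩ hab hne
      rw [Finset.HasAntidiagonal.mem_antidiagonal] at hab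
      have ha : a < n := by
        rcases lt_or_eq_of_le (Nat.le.intro hab) with h' | h'
        · exact h'
        · exfalso; apply hne; subst h'; simp at hab ⊢; omega
      simp [PowerSeries.coeff_mk, ih a ha (ha.trans hn)]
    · intro hmem
      exfalso; exact hmem (by simp)

lemma genocchi_deriv (G : ℕ → ℕ → Polynomial ℚ) (hG : IsGenocchi G) (k n : ℕ) :
    derivative (G k (n + 1)) = C ((n:ℚ) + 1) * G k n := by
  have h := hG k
  have hD := congrArg Dps h
  rw [Dps_mul, Dps_pow_zero _ Dps_expPS_add_one, mul_zero, add_zero, Dps_mul,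
    Dps_pow_zero _ Dps_two_X, zero_mul, zero_add, Dps_expXPS] at hD
  -- hD : Dps (mk ...) * (expPS+1)^k = (2X)^k * (X * expXPS)
  have hre : (2 * PowerSeries.X) ^ k * (PowerSeries.X * expXPS)
      = (PowerSeries.X * PowerSeries.mk fun m => C ((m.factorial : ℚ)⁻¹) * G k m)
          * (expPS + 1) ^ k := by
    rw [mul_assoc PowerSeries.X _ ((expPS + 1) ^ k), h]
    ring
  rw [hre] at hD
  have hU : ((expPS + 1) ^ k : PowerSeries (Polynomial ℚ)) ≠ 0 := by
    intro h0
    have := congrArg (PowerSeries.constantCoeff) h0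
    rw [map_pow, map_add, map_one] at this
    simp only [expPS, PowerSeries.constantCoeff_mk, Nat.factorial_zero, Nat.cast_one, inv_one,
      map_one, map_zero] at this
    norm_num at this
  have hcanc := mul_right_cancel₀ hU hD
  have hc := congrArg (PowerSeries.coeff (n + 1)) hcanc
  rw [Dps_coeff, PowerSeries.coeff_succ_X_mul] at hc
  simp only [PowerSeries.coeff_mk, derivative_mul, derivative_C, zero_mul, zero_add] at hc
  -- hc : C ((n+1)!⁻¹) * derivative (G k (n+1)) = C (n!⁻¹) * G k n
  have hmul := congrArg (fun q => (C (((n+1).factorial : ℚ)) : Polynomial ℚ) * q) hc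
  rw [← mul_assoc, ← C_mul, mul_inv_cancel₀ (by exact_mod_cast Nat.factorial_ne_zero (n+1)),
    C_1, one_mul, ← mul_assoc, ← C_mul] at hmul
  rw [hmul]
  congr 1
  rw [Nat.factorial_succ]
  push_cast
  field_simp

lemma fact_inv_helper (t b : ℕ) (ht : 1 ≤ t) :
    (((t.factorial : ℚ) * (b.factorial : ℚ))⁻¹) * ((t : ℕ) : ℚ)
      = (((t-1).factorial : ℚ) * (b.factorial : ℚ))⁻¹ := by
  obtain ⟨s, rfl⟩ : ∃ s, t = s + 1 := ⟨t - 1, by omega⟩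
  rw [Nat.add_sub_cancel, Nat.factorial_succ]
  have h1 : ((s.factorial : ℚ)) ≠ 0 := by exact_mod_cast Nat.factorial_ne_zero s
  have h2 : ((b.factorial : ℚ)) ≠ 0 := by exact_mod_cast Nat.factorial_ne_zero b
  have h3 : ((s : ℚ) + 1) ≠ 0 := by positivity
  push_cast
  field_simp

lemma fact_inv_helper2 (a b : ℕ) (hb : 1 ≤ b) :
    (((a.factorial : ℚ) * (b.factorial : ℚ))⁻¹) * ((b : ℕ) : ℚ)
      = (((a.factorial : ℚ) * ((b-1).factorial : ℚ))⁻¹) := by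
  rw [mul_comm ((a.factorial : ℚ)) _, fact_inv_helper b a hb, mul_comm]

lemma derivG (G : ℕ → ℕ → Polynomial ℚ) (hG : IsGenocchi G) (k t : ℕ) (ht : 1 ≤ t) :
    derivative (G k t) = C ((t : ℕ) : ℚ) * G k (t - 1) := by
  obtain ⟨s, rfl⟩ : ∃ s, t = s + 1 := ⟨t - 1, by omega⟩
  rw [Nat.add_sub_cancel, genocchi_deriv G hG]
  push_cast
  ring

lemma key_deriv (G : ℕ → ℕ → Polynomial ℚ) (hG : IsGenocchi G) (k : ℕ) (hk : 1 ≤ k) (m : ℕ) :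
    derivative (∑ i ∈ Finset.range (m+1),
        C ((((k+i).factorial : ℚ) * ((m-i).factorial : ℚ))⁻¹) * G k (k+i) * X ^ (m-i))
      = 2 * ∑ i ∈ Finset.range m,
        C ((((k+i).factorial : ℚ) * ((m-1-i).factorial : ℚ))⁻¹) * G k (k+i) * X ^ (m-1-i) := by
  rw [derivative_sum]
  have step : ∀ i ∈ Finset.range (m+1),
      derivative (C ((((k+i).factorial : ℚ) * ((m-i).factorial : ℚ))⁻¹) * G k (k+i) * X ^ (m-i))
        = (C ((((k+i-1).factorial : ℚ) * ((m-i).factorial : ℚ))⁻¹) * G k (k+i-1) * X ^ (m-i))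
          + (C ((((k+i).factorial : ℚ) * ((m-i).factorial : ℚ))⁻¹) * G k (k+i) *
              (C (((m-i : ℕ)) : ℚ) * X ^ (m-i-1))) := by
    intro i _
    rw [derivative_mul, derivative_mul, derivative_C, zero_mul, zero_add, derivative_X_pow,
      derivG G hG k (k+i) (by omega)]
    congr 1
    rw [← fact_inv_helper (k+i) (m-i) (by omega), C_mul]
    push_cast
    ring
  rw [Finset.sum_congr rfl step, Finset.sum_add_distrib]
  have hA : (∑ i ∈ Finset.range (m+1),
      C ((((k+i-1).factorial : ℚ) * ((m-i).factorial : ℚ))⁻¹) * G k (k+i-1) * X ^ (m-i))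
      = ∑ i ∈ Finset.range m,
        C ((((k+i).factorial : ℚ) * ((m-1-i).factorial : ℚ))⁻¹) * G k (k+i) * X ^ (m-1-i) := by
    rw [Finset.sum_range_succ']
    have h0 : C ((((k+0-1).factorial : ℚ) * ((m-0).factorial : ℚ))⁻¹) * G k (k+0-1) * X ^ (m-0)
        = 0 := by
      rw [genocchi_vanish G hG k (k+0-1) (by omega)]
      ring
    rw [h0, add_zero]
    apply Finset.sum_congr rfl
    intro i _
    have e1 : k + (i+1) - 1 = k + i := by omega
    have e2 : m - (i+1) = m - 1 - i := by omega
    rw [e1, e2]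
  have hB : (∑ i ∈ Finset.range (m+1),
      C ((((k+i).factorial : ℚ) * ((m-i).factorial : ℚ))⁻¹) * G k (k+i) *
        (C (((m-i : ℕ)) : ℚ) * X ^ (m-i-1)))
      = ∑ i ∈ Finset.range m,
        C ((((k+i).factorial : ℚ) * ((m-1-i).factorial : ℚ))⁻¹) * G k (k+i) * X ^ (m-1-i) := by
    rw [Finset.sum_range_succ]
    have h0 : C ((((k+m).factorial : ℚ) * ((m-m).factorial : ℚ))⁻¹) * G k (k+m) *
        (C (((m-m : ℕ)) : ℚ) * X ^ (m-m-1)) = 0 := by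
      rw [Nat.sub_self]
      simp
    rw [h0, add_zero]
    apply Finset.sum_congr rfl
    intro i hi
    rw [Finset.mem_range] at hi
    have e2 : m - 1 - i = m - i - 1 := by omega
    rw [e2, ← fact_inv_helper2 (k+i) (m-i) (by omega), C_mul]
    ring
  rw [hA, hB, two_mul]

lemma icc_to_range (G : ℕ → ℕ → Polynomial ℚ) (n k j : ℕ) (hj : j ≤ n) :
    (∑ l ∈ Finset.Icc (k + j) (n + k),
        C ((((l - j).factorial : ℚ) * ((n + k - l).factorial : ℚ))⁻¹) * G k (l - j) *
          X ^ (n + k - l))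
      = ∑ i ∈ Finset.range (n - j + 1),
          C ((((k+i).factorial : ℚ) * ((n-j-i).factorial : ℚ))⁻¹) * G k (k+i) * X ^ (n-j-i) := by
  rw [← Finset.Ico_add_one_right_eq_Icc, Finset.sum_Ico_eq_sum_range]
  have hcnt : n + k + 1 - (k + j) = n - j + 1 := by omega
  rw [hcnt]
  apply Finset.sum_congr rfl
  intro i hi
  rw [Finset.mem_range] at hi
  have e1 : k + j + i - j = k + i := by omega
  have e2 : n + k - (k + j + i) = n - j - i := by omega
  rw [e1, e2]


theorem genocchi_weighted_poly_iterated_deriv (G : ℕ → ℕ → Polynomial ℚ) (hG : IsGenocchi G)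
    (n k : ℕ) (hk : 1 ≤ k)
    (p : Polynomial ℚ)
    (hp : p = ∑ l ∈ Finset.Icc k (n + k),
      Polynomial.C (((l.factorial : ℚ) * ((n + k - l).factorial : ℚ))⁻¹) * G k l *
        Polynomial.X ^ (n + k - l))
    (j : ℕ) (hj : j ≤ n) :
    derivative^[j] p
      = Polynomial.C ((2 : ℚ) ^ j) *
        ∑ l ∈ Finset.Icc (k + j) (n + k),
          Polynomial.C ((((l - j).factorial : ℚ) * ((n + k - l).factorial : ℚ))⁻¹) *
            G k (l - j) * Polynomial.X ^ (n + k - l) := by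
  subst hp
  induction j with
  | zero =>
    simp only [Function.iterate_zero, id_eq, pow_zero, map_one, one_mul, add_zero, Nat.sub_zero]
  | succ j ih =>
    have hj' : j ≤ n := by omega
    rw [Function.iterate_succ_apply', ih hj', derivative_C_mul, icc_to_range G n k j hj']
    have hm : n - j = (n - (j+1)) + 1 := by omega
    rw [hm, key_deriv G hG k hk, icc_to_range G n k (j+1) hj]
    simp only [Nat.add_sub_cancel]
    rw [← mul_assoc]
    congr 1
    rw [pow_succ, C_mul]
    congr 1
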